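/- For n ≥ 2, the centre of the group D_n (the subgroup of Graphs(n+1) ⋊ S_{n+1} generated by x_1,...,x_n) has order 2 if n ≡ 0 (mod 4), and is trivial otherwise. -/

import Mathlib

open Equiv Finset

abbrev Vtx (n : ℕ) := Fin (n+1)
abbrev Edge (n : ℕ) := {e : Sym2 (Vtx n) // ¬ e.IsDiag}
abbrev Graphs (n : ℕ) := Edge n → ZMod 2

/-- relabelling of edges by a permutation of vertices -/
def permEdge {n : ℕ} (σ : Perm (Vtx n)) : Edge n ≃ Edge n where
  toFun e := ⟨Sym2.map σ e.1, by
    simpa [Sym2.isDiag_map σ.injective] using e.2⟩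
  invFun e := ⟨Sym2.map σ.symm e.1, by
    simpa [Sym2.isDiag_map σ.symm.injective] using e.2⟩
  left_inv e := by
    ext1
    simp [Sym2.map_map]
  right_inv e := by
    ext1
    simp [Sym2.map_map]

/-- action of a vertex permutation on graphs -/
def gact {n : ℕ} (σ : Perm (Vtx n)) : Graphs n ≃+ Graphs n where
  toFun g := fun e => g ((permEdge σ).symm e)
  invFun g := fun e => g (permEdge σ e)
  left_inv g := by funext e; simp
  right_inv g := by funext e; simp
  map_add' g h := rfl

lemma gact_mul {n : ℕ} (σ τ : Perm (Vtx n)) (g : Graphs n) :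
    gact (σ * τ) g = gact σ (gact τ g) := by
  funext e
  simp only [gact, AddEquiv.coe_mk, Equiv.coe_fn_mk, Equiv.symm]
  congr 1
  ext1
  simp [permEdge, Sym2.map_map]
  rfl

/-- the action as a homomorphism to automorphisms, multiplicatively -/
def φn (n : ℕ) : Perm (Vtx n) →* MulAut (Multiplicative (Graphs n)) where
  toFun σ := AddEquiv.toMultiplicative (gact σ)
  map_one' := by
    ext g : 1
    simp [gact, permEdge, Equiv.Perm.one_symm]
  map_mul' σ τ := by
    ext g : 1
    exact gact_mul σ τ g.toAdd

/-- the ambient group `Graphs(n+1) ⋊ S_{n+1}` -/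
abbrev DG (n : ℕ) := SemidirectProduct (Multiplicative (Graphs n)) (Perm (Vtx n)) (φn n)

/-- the single-edge graph with edge `{u,v}` -/
def single {n : ℕ} (u v : Vtx n) : Graphs n :=
  fun e => if e.1 = s(u, v) then 1 else 0

/-- the generator `x_m = (e_{0m}, (0 m))` -/
def xgen {n : ℕ} (m : Vtx n) : DG n :=
  ⟨Multiplicative.ofAdd (single 0 m), Equiv.swap 0 m⟩

/-- the degree of a vertex in a graph -/
def deg {n : ℕ} (g : Graphs n) (v : Vtx n) : ℕ :=
  (Finset.univ.filter (fun e : Edge n => v ∈ e.1 ∧ g e = 1)).card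

/-- the number of edges of a graph -/
def nedges {n : ℕ} (g : Graphs n) : ℕ :=
  (Finset.univ.filter (fun e : Edge n => g e = 1)).card

/-- all degrees even and an even number of edges -/
def evenGraph {n : ℕ} (g : Graphs n) : Prop :=
  (∀ v : Vtx n, Even (deg g v)) ∧ Even (nedges g)

/-- the subgroup generated by the `x_m`, `m = 1, …, n` -/
def Dn (n : ℕ) : Subgroup (DG n) :=
  Subgroup.closure {x | ∃ m : Vtx n, m ≠ 0 ∧ x = xgen m}

/-- the complete graph -/
def complete (n : ℕ) : Graphs n := fun _ => 1
open Fin.NatCast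
----------------------------------------------------------------
-- Section 1 : basic lemmas
----------------------------------------------------------------

namespace Helper

variable {n : ℕ}

lemma add_self (g : Graphs n) : g + g = 0 := by
  funext e; exact CharTwo.add_self_eq_zero _

lemma gact_one (g : Graphs n) : gact (1 : Perm (Vtx n)) g = g := by
  funext e
  simp [gact, permEdge, Equiv.Perm.one_symm]

lemma mk_mul (g h : Graphs n) (σ τ : Perm (Vtx n)) :
    (⟨Multiplicative.ofAdd g, σ⟩ * ⟨Multiplicative.ofAdd h, τ⟩ : DG n)
      = ⟨Multiplicative.ofAdd (g + gact σ h), σ * τ⟩ := by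
  ext : 1
  · show Multiplicative.ofAdd g * (φn n σ) (Multiplicative.ofAdd h) = _
    rfl
  · rfl

lemma gact_single (σ : Perm (Vtx n)) (u v : Vtx n) :
    gact σ (single u v) = single (σ u) (σ v) := by
  funext e
  show (if Sym2.map σ.symm e.1 = s(u,v) then (1:ZMod 2) else 0) = _
  have : Sym2.map σ.symm e.1 = s(u,v) ↔ e.1 = s(σ u, σ v) := by
    constructor
    · intro h
      have := congrArg (Sym2.map σ) h
      rwa [Sym2.map_map, show (⇑σ ∘ ⇑σ.symm) = id from funext (fun x => σ.apply_symm_apply x),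
        Sym2.map_id, id_eq] at this
    · intro h
      rw [h]
      simp [Sym2.map_pair_eq]
  simp [single, this]

lemma single_comm (u v : Vtx n) : single u v = single v u := by
  funext e
  simp [single, Sym2.eq_swap (a := u)]

def C4 (a b c d : Vtx n) : Graphs n := single a b + single b c + single c d + single d a

lemma right_xgen (m : Vtx n) : (xgen m).right = Equiv.swap 0 m := rfl

end Helper

namespace Helper
variable {n : ℕ}
open Multiplicative

lemma xgen_mem {m : Vtx n} (hm : m ≠ 0) : xgen m ∈ Dn n :=
  Subgroup.subset_closure ⟨m, hm, rfl⟩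

/-- the permutation `(0 a)(0 b)(0 c)` -/
def pc (a b c : Vtx n) : Perm (Vtx n) := Equiv.swap 0 a * Equiv.swap 0 b * Equiv.swap 0 c

section abc
variable {a b c : Vtx n} (ha : a ≠ 0) (hb : b ≠ 0) (hc : c ≠ 0)
  (hab : a ≠ b) (hac : a ≠ c) (hbc : b ≠ c)

include ha hb hc hab hac hbc

lemma pc_zero : pc a b c 0 = c := by
  simp only [pc, Perm.mul_apply, swap_apply_left]
  rw [swap_apply_of_ne_of_ne hc (fun h => hbc h.symm),
    swap_apply_of_ne_of_ne hc (fun h => hac h.symm)]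

lemma pc_a : pc a b c a = 0 := by
  simp only [pc, Perm.mul_apply]
  rw [swap_apply_of_ne_of_ne ha hac, swap_apply_of_ne_of_ne ha hab, swap_apply_right]

lemma pc_b : pc a b c b = a := by
  simp only [pc, Perm.mul_apply]
  rw [swap_apply_of_ne_of_ne hb hbc, swap_apply_right, swap_apply_left]

lemma pc_c : pc a b c c = b := by
  simp only [pc, Perm.mul_apply]
  rw [swap_apply_right, swap_apply_left, swap_apply_of_ne_of_ne hb (fun h => hab h.symm)]

lemma pc_other {x : Vtx n} (hx0 : x ≠ 0) (hxa : x ≠ a) (hxb : x ≠ b) (hxc : x ≠ c) :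
    pc a b c x = x := by
  simp only [pc, Perm.mul_apply]
  rw [swap_apply_of_ne_of_ne hx0 hxc, swap_apply_of_ne_of_ne hx0 hxb,
    swap_apply_of_ne_of_ne hx0 hxa]

lemma pc_pow_four : (pc a b c)^4 = 1 := by
  ext x
  simp only [pow_succ, pow_zero, one_mul, Perm.mul_apply, Perm.one_apply]
  by_cases hx0 : x = 0
  · subst hx0
    rw [pc_zero ha hb hc hab hac hbc, pc_c ha hb hc hab hac hbc,
      pc_b ha hb hc hab hac hbc, pc_a ha hb hc hab hac hbc]
  by_cases hxa : x = a
  · subst hxa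
    rw [pc_a ha hb hc hab hac hbc, pc_zero ha hb hc hab hac hbc,
      pc_c ha hb hc hab hac hbc, pc_b ha hb hc hab hac hbc]
  by_cases hxb : x = b
  · subst hxb
    rw [pc_b ha hb hc hab hac hbc, pc_a ha hb hc hab hac hbc,
      pc_zero ha hb hc hab hac hbc, pc_c ha hb hc hab hac hbc]
  by_cases hxc : x = c
  · subst hxc
    rw [pc_c ha hb hc hab hac hbc, pc_b ha hb hc hab hac hbc,
      pc_a ha hb hc hab hac hbc, pc_zero ha hb hc hab hac hbc]
  · rw [pc_other ha hb hc hab hac hbc hx0 hxa hxb hxc,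
      pc_other ha hb hc hab hac hbc hx0 hxa hxb hxc,
      pc_other ha hb hc hab hac hbc hx0 hxa hxb hxc,
      pc_other ha hb hc hab hac hbc hx0 hxa hxb hxc]

lemma xgen_prod : xgen a * xgen b * xgen c
    = ⟨ofAdd (single 0 a + single a b + single b c), pc a b c⟩ := by
  show (⟨ofAdd (single 0 a), Equiv.swap 0 a⟩ * ⟨ofAdd (single 0 b), Equiv.swap 0 b⟩
    * ⟨ofAdd (single 0 c), Equiv.swap 0 c⟩ : DG n) = _
  rw [mk_mul, mk_mul, gact_single, gact_single]
  rw [swap_apply_left, swap_apply_of_ne_of_ne hb (fun h => hab h.symm)]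
  rw [Perm.mul_apply, Perm.mul_apply, swap_apply_left,
    swap_apply_of_ne_of_ne hc (fun h => hbc h.symm),
    swap_apply_of_ne_of_ne hc (fun h => hac h.symm),
    swap_apply_of_ne_of_ne hb (fun h => hab h.symm)]
  rfl

lemma gact_pc_Q :
    gact (pc a b c) (single 0 a + single a b + single b c)
      = single c 0 + single 0 a + single a b := by
  rw [map_add, map_add, gact_single, gact_single, gact_single,
    pc_zero ha hb hc hab hac hbc, pc_a ha hb hc hab hac hbc,
    pc_b ha hb hc hab hac hbc, pc_c ha hb hc hab hac hbc]

lemma gact_pc_Q2 :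
    gact (pc a b c) (single c 0 + single 0 a + single a b)
      = single b c + single c 0 + single 0 a := by
  rw [map_add, map_add, gact_single, gact_single, gact_single,
    pc_zero ha hb hc hab hac hbc, pc_a ha hb hc hab hac hbc,
    pc_b ha hb hc hab hac hbc, pc_c ha hb hc hab hac hbc]

lemma gact_pc_Q3 :
    gact (pc a b c) (single b c + single c 0 + single 0 a)
      = single a b + single b c + single c 0 := by
  rw [map_add, map_add, gact_single, gact_single, gact_single,
    pc_zero ha hb hc hab hac hbc, pc_a ha hb hc hab hac hbc,
    pc_b ha hb hc hab hac hbc, pc_c ha hb hc hab hac hbc]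

lemma z_pow_four : ((xgen a * xgen b * xgen c : DG n))^4 = ⟨ofAdd (C4 0 a b c), 1⟩ := by
  rw [xgen_prod ha hb hc hab hac hbc]
  rw [pow_succ, pow_succ, pow_succ, pow_one, mk_mul, mk_mul, mk_mul]
  rw [gact_mul, gact_mul, gact_mul,
    gact_pc_Q ha hb hc hab hac hbc, gact_pc_Q2 ha hb hc hab hac hbc,
    gact_pc_Q3 ha hb hc hab hac hbc]
  have hperm : pc a b c * pc a b c * pc a b c * pc a b c = 1 := by
    have h := pc_pow_four ha hb hc hab hac hbc
    rwa [pow_succ, pow_succ, pow_succ, pow_one] at h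
  have hgr : single 0 a + single a b + single b c + (single c 0 + single 0 a + single a b)
      + (single b c + single c 0 + single 0 a) + (single a b + single b c + single c 0)
      = C4 0 a b c := by
    have : single 0 a + single a b + single b c + (single c 0 + single 0 a + single a b)
      + (single b c + single c 0 + single 0 a) + (single a b + single b c + single c 0)
      = (single 0 a + single a b + single b c + single c 0)
        + ((single 0 a + single 0 a) + ((single a b + single a b)
          + ((single b c + single b c) + (single c 0 + single c 0)))) := by abel
    rw [this, add_self, add_self, add_self, add_self]
    simp [C4]
  rw [hgr, hperm]

lemma c4_zero_mem : (⟨ofAdd (C4 0 a b c), 1⟩ : DG n) ∈ Dn n := by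
  rw [← z_pow_four ha hb hc hab hac hbc]
  exact pow_mem (mul_mem (mul_mem (xgen_mem ha) (xgen_mem hb)) (xgen_mem hc)) 4

end abc
end Helper

namespace Helper
variable {n : ℕ}
open Multiplicative

lemma conj_ker (y : DG n) (g : Graphs n) :
    y * ⟨ofAdd g, 1⟩ * y⁻¹ = ⟨ofAdd (gact y.right g), 1⟩ := by
  ext : 1
  · show y.left * (φn n y.right) (ofAdd g) * (φn n (y.right * 1)) ((φn n y.right⁻¹) y.left⁻¹) = _
    rw [mul_one]
    have : (φn n y.right) ((φn n y.right⁻¹) y.left⁻¹) = y.left⁻¹ := by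
      rw [← MulAut.mul_apply, ← map_mul, mul_inv_cancel, map_one, MulAut.one_apply]
    rw [this, mul_comm (y.left * _), ← mul_assoc, inv_mul_cancel, one_mul]
    rfl
  · simp

lemma C4_cyc (a b c d : Vtx n) : C4 a b c d = C4 b c d a := by
  unfold C4; abel

lemma C4_mem {a b c d : Vtx n} (hab : a ≠ b) (hac : a ≠ c) (had : a ≠ d)
    (hbc : b ≠ c) (hbd : b ≠ d) (hcd : c ≠ d) :
    (⟨ofAdd (C4 a b c d), 1⟩ : DG n) ∈ Dn n := by
  -- first: the case a = 0
  by_cases ha0 : a = 0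
  · subst ha0
    exact c4_zero_mem (Ne.symm hab) (Ne.symm hac) (Ne.symm had) hbc hbd hcd
  by_cases hb0 : b = 0
  · subst hb0
    rw [C4_cyc]
    exact c4_zero_mem (Ne.symm hbc) (Ne.symm hbd) ha0 hcd (Ne.symm hac) (Ne.symm had)
  by_cases hc0 : c = 0
  · subst hc0
    rw [C4_cyc, C4_cyc]
    exact c4_zero_mem (Ne.symm hcd) ha0 hb0 (Ne.symm had) (Ne.symm hbd) hab
  by_cases hd0 : d = 0
  · subst hd0
    rw [C4_cyc, C4_cyc, C4_cyc]
    exact c4_zero_mem ha0 hb0 hc0 hab hac hbc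
  -- generic case: conjugate C4 0 b c d by xgen a
  · have key : gact (Equiv.swap 0 a) (C4 0 b c d) = C4 a b c d := by
      unfold C4
      rw [map_add, map_add, map_add, gact_single, gact_single, gact_single, gact_single,
        swap_apply_left,
        swap_apply_of_ne_of_ne hb0 (fun h => hab h.symm),
        swap_apply_of_ne_of_ne hc0 (fun h => hac h.symm),
        swap_apply_of_ne_of_ne hd0 (fun h => had h.symm)]
    have := conj_ker (xgen a) (C4 0 b c d)
    rw [right_xgen, key] at this
    rw [← this]
    exact mul_mem (mul_mem (xgen_mem ha0) (c4_zero_mem hb0 hc0 hd0 hbc hbd hcd))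
      (inv_mem (xgen_mem ha0))

/-- the set of graphs `g` with `(g,1) ∈ Dn` -/
lemma ker_add {g h : Graphs n} (hg : (⟨ofAdd g, 1⟩ : DG n) ∈ Dn n)
    (hh : (⟨ofAdd h, 1⟩ : DG n) ∈ Dn n) : (⟨ofAdd (g+h), 1⟩ : DG n) ∈ Dn n := by
  have : (⟨ofAdd g, 1⟩ : DG n) * ⟨ofAdd h, 1⟩ = ⟨ofAdd (g+h), 1⟩ := by
    rw [mk_mul, gact_one, mul_one]
  rw [← this]; exact mul_mem hg hh

lemma ker_zero : (⟨ofAdd (0 : Graphs n), 1⟩ : DG n) ∈ Dn n := by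
  have : (⟨ofAdd (0 : Graphs n), 1⟩ : DG n) = 1 := rfl
  rw [this]; exact one_mem _

lemma ker_sum {ι : Type*} (s : Finset ι) (f : ι → Graphs n)
    (hf : ∀ i ∈ s, (⟨ofAdd (f i), 1⟩ : DG n) ∈ Dn n) :
    (⟨ofAdd (∑ i ∈ s, f i), 1⟩ : DG n) ∈ Dn n := by
  classical
  induction s using Finset.induction_on with
  | empty => simpa using ker_zero
  | insert a s hx ih =>
    rw [Finset.sum_insert hx]
    exact ker_add (hf _ (Finset.mem_insert_self _ _))
      (ih (fun i hi => hf i (Finset.mem_insert_of_mem hi)))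

end Helper

namespace Helper
variable {n : ℕ}
open Multiplicative

/-- triangle with vertices `i, i+d, i+2d` -/
def Tri (i d : Vtx n) : Graphs n :=
  single i (i+d) + single (i+d) (i+(d+d)) + single i (i+(d+d))

/-- the "difference class" circulant graph -/
def Gd (c : Vtx n) : Graphs n := ∑ i : Vtx n, single i (i+c)

lemma sum_tri (d : Vtx n) : ∑ i : Vtx n, Tri i d = Gd (d+d) := by
  unfold Tri
  rw [Finset.sum_add_distrib, Finset.sum_add_distrib]
  have h2 : ∑ i : Vtx n, single (i+d) (i+(d+d)) = ∑ i : Vtx n, single i (i+d) := by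
    refine Fintype.sum_equiv (Equiv.addRight d) _ _ (fun i => ?_)
    simp only [Equiv.coe_addRight]
    rw [add_assoc]
  rw [h2, add_self, zero_add]
  rfl

lemma bowtie (i d d' : Vtx n) : Tri i d + Tri i d' =
    C4 i (i+(d+d)) (i+d) (i+(d'+d')) + C4 i (i+d) (i+(d'+d')) (i+d') := by
  have h : C4 i (i+(d+d)) (i+d) (i+(d'+d')) + C4 i (i+d) (i+(d'+d')) (i+d')
      = (Tri i d + Tri i d') + (single (i+d) (i+(d'+d')) + single (i+d) (i+(d'+d'))) := by
    unfold C4 Tri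
    rw [single_comm (i+(d+d)) (i+d), single_comm (i+(d'+d')) i,
      single_comm (i+(d'+d')) (i+d'), single_comm (i+d') i]
    abel
  rw [h, add_self, add_zero]

lemma pair_sum {M : Type*} [AddCommMonoid M] (f : ℕ → M) (k : ℕ) :
    ∑ j ∈ Finset.range k, (f (2*j) + f (2*j+1)) = ∑ t ∈ Finset.range (2*k), f t := by
  induction k with
  | zero => simp
  | succ k ih =>
    rw [Finset.sum_range_succ, ih, show 2*(k+1) = (2*k+1)+1 by ring,
      Finset.sum_range_succ, Finset.sum_range_succ, add_assoc]

lemma cast_ne {m₁ m₂ : ℕ} (h1 : m₁ < n+1) (h2 : m₂ < n+1) (hne : m₁ ≠ m₂) :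
    (m₁ : Vtx n) ≠ (m₂ : Vtx n) := by
  intro h
  apply hne
  have := congrArg Fin.val h
  rwa [Fin.val_cast_of_lt h1, Fin.val_cast_of_lt h2] at this

lemma Gd_apply (c u v : Vtx n) (huv : u ≠ v) (hnd : ¬ (s(u,v) : Sym2 (Vtx n)).IsDiag) :
    Gd c ⟨s(u,v), hnd⟩
      = (if c = v - u then (1 : ZMod 2) else 0) + (if c = u - v then 1 else 0) := by
  have term : ∀ i : Vtx n, single i (i+c) ⟨s(u,v), hnd⟩
      = (if i = u ∧ c = v - u then (1:ZMod 2) else 0)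
        + (if i = v ∧ c = u - v then (1:ZMod 2) else 0) := by
    intro i
    show (if (s(u,v) : Sym2 (Vtx n)) = s(i, i+c) then (1:ZMod 2) else 0) = _
    simp only [Sym2.eq_iff]
    by_cases h1 : i = u ∧ c = v - u
    · have hno : ¬(i = v ∧ c = u - v) := by
        rintro ⟨rfl, -⟩
        exact huv h1.1.symm
      rw [if_pos, if_pos h1, if_neg hno, add_zero]
      exact Or.inl ⟨h1.1.symm, by rw [h1.1, h1.2, add_sub_cancel]⟩
    · by_cases h2 : i = v ∧ c = u - v
      · rw [if_pos, if_neg h1, if_pos h2, zero_add]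
        exact Or.inr ⟨by rw [h2.1, h2.2, add_sub_cancel], h2.1.symm⟩
      · rw [if_neg, if_neg h1, if_neg h2, add_zero]
        rintro (⟨ha1, ha2⟩ | ⟨hb1, hb2⟩)
        · exact h1 ⟨ha1.symm, by rw [ha2, ha1, add_sub_cancel_left]⟩
        · exact h2 ⟨hb2.symm, by rw [hb1, hb2, add_sub_cancel_left]⟩
  show (∑ i : Vtx n, single i (i+c)) ⟨s(u,v), hnd⟩ = _
  rw [Finset.sum_apply]
  rw [Finset.sum_congr rfl (fun i _ => term i), Finset.sum_add_distrib]
  simp only [ite_and]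
  rw [Finset.sum_ite_eq' Finset.univ u, Finset.sum_ite_eq' Finset.univ v]
  simp

lemma val_add_neg_val (w : Vtx n) (hw : w ≠ 0) : w.val + (-w).val = n+1 := by
  have h0 : (-w + w) = 0 := by abel
  have := congrArg Fin.val h0
  rw [Fin.val_add] at this
  have h1 : ((-w).val + w.val) % (n+1) = 0 := this
  have hwv : w.val ≠ 0 := by
    intro h; exact hw (Fin.ext h)
  have hlt1 : w.val < n+1 := w.isLt
  have hlt2 : (-w).val < n+1 := (-w).isLt
  obtain ⟨q, hq⟩ := Nat.dvd_of_mod_eq_zero h1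
  rcases q with _ | q
  · omega
  rcases q with _ | q
  · omega
  · have hx : (n+1)*(q+1+1) = (n+1)*q + (n+1) + (n+1) := by ring
    rw [hx] at hq
    omega

lemma count_lemma (k : ℕ) (hk : n = 4*k) (w : Vtx n) (hw : w ≠ 0) :
    ∑ t ∈ Finset.range (2*k), (if ((2*t+2 : ℕ) : Vtx n) = w then (1:ZMod 2) else 0)
      = if w.val % 2 = 0 then 1 else 0 := by
  have hcast : ∀ t ∈ Finset.range (2*k),
      (if ((2*t+2 : ℕ) : Vtx n) = w then (1:ZMod 2) else 0)
        = (if 2*t+2 = w.val then (1:ZMod 2) else 0) := by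
    intro t ht
    rw [Finset.mem_range] at ht
    have hlt : 2*t+2 < n+1 := by omega
    refine if_congr ?_ rfl rfl
    constructor
    · intro h
      have := congrArg Fin.val h
      rwa [Fin.val_cast_of_lt hlt] at this
    · intro h
      apply Fin.ext
      rw [Fin.val_cast_of_lt hlt]
      exact h
  rw [Finset.sum_congr rfl hcast]
  have hwv : w.val ≠ 0 := fun h => hw (Fin.ext h)
  have hlt1 : w.val < n+1 := w.isLt
  by_cases hpar : w.val % 2 = 0
  · rw [if_pos hpar]
    have ht0 : w.val/2 - 1 < 2*k := by omega
    rw [Finset.sum_eq_single (w.val/2 - 1)]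
    · rw [if_pos (by omega)]
    · intro b _ hb
      rw [if_neg (by omega)]
    · intro h
      exact absurd (Finset.mem_range.mpr ht0) h
  · rw [if_neg hpar]
    apply Finset.sum_eq_zero
    intro t _
    rw [if_neg (by omega)]

lemma sum_G (k : ℕ) (hk : n = 4*k) (hk1 : 1 ≤ k) :
    ∑ t ∈ Finset.range (2*k), Gd (((2*t+2 : ℕ) : Vtx n)) = complete n := by
  funext e
  obtain ⟨z, hnd⟩ := e
  revert hnd
  refine Sym2.ind (fun u v => ?_) z
  intro hnd
  have huv : u ≠ v := by simpa [Sym2.mk_isDiag_iff] using hnd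
  rw [Finset.sum_apply]
  have : ∀ t ∈ Finset.range (2*k), Gd (((2*t+2 : ℕ) : Vtx n)) ⟨s(u,v), hnd⟩
      = (if ((2*t+2:ℕ) : Vtx n) = v - u then (1 : ZMod 2) else 0)
        + (if ((2*t+2:ℕ) : Vtx n) = u - v then 1 else 0) :=
    fun t _ => Gd_apply _ u v huv hnd
  rw [Finset.sum_congr rfl this, Finset.sum_add_distrib]
  have hvu : v - u ≠ 0 := sub_ne_zero.mpr (Ne.symm huv)
  have huv' : u - v ≠ 0 := sub_ne_zero.mpr huv
  rw [count_lemma k hk _ hvu, count_lemma k hk _ huv']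
  have hneg : -(v-u) = u - v := neg_sub v u
  have hsum : (v-u).val + (u-v).val = n+1 := by
    have := val_add_neg_val (v-u) hvu
    rwa [hneg] at this
  show _ = (1 : ZMod 2)
  have hodd : ¬((v-u).val % 2 = 0 ∧ (u-v).val % 2 = 0) ∧
      ((v-u).val % 2 = 0 ∨ (u-v).val % 2 = 0) := by omega
  by_cases hp : (v-u).val % 2 = 0
  · rw [if_pos hp, if_neg (fun h => hodd.1 ⟨hp, h⟩), add_zero]
  · rw [if_neg hp, if_pos (hodd.2.resolve_left hp), zero_add]

lemma complete_mem (k : ℕ) (hk : n = 4*k) (hk1 : 1 ≤ k) :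
    (⟨ofAdd (complete n), 1⟩ : DG n) ∈ Dn n := by
  have key : complete n
      = ∑ j ∈ Finset.range k, ∑ i : Vtx n,
          (Tri i (((2*j+1 : ℕ) : Vtx n)) + Tri i (((2*j+2 : ℕ) : Vtx n))) := by
    have step1 : ∀ j : ℕ, ∑ i : Vtx n,
        (Tri i (((2*j+1 : ℕ) : Vtx n)) + Tri i (((2*j+2 : ℕ) : Vtx n)))
        = Gd (((2*(2*j)+2 : ℕ) : Vtx n)) + Gd (((2*(2*j+1)+2 : ℕ) : Vtx n)) := by
      intro j
      rw [Finset.sum_add_distrib, sum_tri, sum_tri]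
      congr 1
      · congr 1
        rw [show ((2*(2*j)+2 : ℕ) : Vtx n) = ((2*j+1 : ℕ) : Vtx n) + ((2*j+1 : ℕ) : Vtx n) by
          rw [← Nat.cast_add]; congr 1; ring]
      · congr 1
        rw [show ((2*(2*j+1)+2 : ℕ) : Vtx n) = ((2*j+2 : ℕ) : Vtx n) + ((2*j+2 : ℕ) : Vtx n) by
          rw [← Nat.cast_add]; congr 1; ring]
    rw [Finset.sum_congr rfl (fun j _ => step1 j),
      pair_sum (fun t => Gd (((2*t+2 : ℕ) : Vtx n))) k, sum_G k hk hk1]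
  rw [key]
  apply ker_sum
  intro j hj
  apply ker_sum
  intro i _
  rw [Finset.mem_range] at hj
  rw [bowtie]
  have hc : ∀ m₁ m₂ : ℕ, m₁ < n+1 → m₂ < n+1 → m₁ ≠ m₂ →
      ((m₁ : ℕ) : Vtx n) ≠ ((m₂ : ℕ) : Vtx n) := fun _ _ => cast_ne
  have hne : ∀ x y : Vtx n, x ≠ y → i + x ≠ i + y := by
    intro x y hxy h
    exact hxy (add_left_cancel h)
  have hne0 : ∀ x : Vtx n, x ≠ 0 → i ≠ i + x := by
    intro x hx h
    exact hx (left_eq_add.mp h)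
  set d : Vtx n := ((2*j+1 : ℕ) : Vtx n) with hd
  set d' : Vtx n := ((2*j+2 : ℕ) : Vtx n) with hd'
  have hdd : d + d = ((4*j+2 : ℕ) : Vtx n) := by
    rw [hd, ← Nat.cast_add]; congr 1; ring
  have hdd' : d' + d' = ((4*j+4 : ℕ) : Vtx n) := by
    rw [hd', ← Nat.cast_add]; congr 1; ring
  have b1 : 2*j+1 < n+1 := by omega
  have b2 : 2*j+2 < n+1 := by omega
  have b3 : 4*j+2 < n+1 := by omega
  have b4 : 4*j+4 < n+1 := by omega
  have b0 : (0:ℕ) < n+1 := by omega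
  have z0 : ((0:ℕ) : Vtx n) = (0 : Vtx n) := by simp
  apply ker_add
  · apply C4_mem
    · exact hne0 _ (by rw [hdd]; rw [← z0]; exact (hc _ _ b0 b3 (by omega)).symm)
    · exact hne0 _ (by rw [hd, ← z0]; exact (hc _ _ b0 b1 (by omega)).symm)
    · exact hne0 _ (by rw [hdd']; rw [← z0]; exact (hc _ _ b0 b4 (by omega)).symm)
    · exact hne _ _ (by rw [hdd, hd]; exact hc _ _ b3 b1 (by omega))
    · exact hne _ _ (by rw [hdd, hdd']; exact hc _ _ b3 b4 (by omega))
    · exact hne _ _ (by rw [hd, hdd']; exact hc _ _ b1 b4 (by omega))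
  · apply C4_mem
    · exact hne0 _ (by rw [hd, ← z0]; exact (hc _ _ b0 b1 (by omega)).symm)
    · exact hne0 _ (by rw [hdd']; rw [← z0]; exact (hc _ _ b0 b4 (by omega)).symm)
    · exact hne0 _ (by rw [hd', ← z0]; exact (hc _ _ b0 b2 (by omega)).symm)
    · exact hne _ _ (by rw [hd, hdd']; exact hc _ _ b1 b4 (by omega))
    · exact hne _ _ (by rw [hd, hd']; exact hc _ _ b1 b2 (by omega))
    · exact hne _ _ (by rw [hdd', hd']; exact hc _ _ b4 b2 (by omega))

end Helper

namespace Helper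
variable {n : ℕ}
open Multiplicative

def degZ (g : Graphs n) (v : Vtx n) : ZMod 2 :=
  ∑ e ∈ Finset.univ.filter (fun e : Edge n => v ∈ e.1), g e

def nEZ (g : Graphs n) : ZMod 2 := ∑ e : Edge n, g e

def fD (v : Vtx n) : ZMod 2 := if v = 0 then 1 else 0

def sgn (σ : Perm (Vtx n)) : ZMod 2 := if Perm.sign σ = 1 then 0 else 1

lemma degZ_add (g h : Graphs n) (v : Vtx n) : degZ (g+h) v = degZ g v + degZ h v := by
  unfold degZ
  rw [← Finset.sum_add_distrib]
  rfl

lemma nEZ_add (g h : Graphs n) : nEZ (g+h) = nEZ g + nEZ h := by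
  unfold nEZ
  rw [← Finset.sum_add_distrib]
  rfl

lemma mem_map_iff (σ : Perm (Vtx n)) (z : Sym2 (Vtx n)) (v : Vtx n) :
    v ∈ Sym2.map σ z ↔ σ.symm v ∈ z := by
  rw [Sym2.mem_map]
  constructor
  · rintro ⟨a, ha, rfl⟩
    rwa [Equiv.symm_apply_apply]
  · intro h
    exact ⟨σ.symm v, h, Equiv.apply_symm_apply σ v⟩

lemma degZ_gact (σ : Perm (Vtx n)) (g : Graphs n) (v : Vtx n) :
    degZ (gact σ g) v = degZ g (σ⁻¹ v) := by
  unfold degZ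
  rw [Finset.sum_filter, Finset.sum_filter]
  refine Fintype.sum_equiv (permEdge σ).symm _ _ (fun x => ?_)
  have hc : ((σ⁻¹ : Perm (Vtx n)) v ∈ ((permEdge σ).symm x).1) ↔ v ∈ x.1 := by
    show σ.symm v ∈ Sym2.map σ.symm x.1 ↔ _
    rw [mem_map_iff, Equiv.symm_symm, Equiv.apply_symm_apply]
  have hval : gact σ g x = g ((permEdge σ).symm x) := rfl
  by_cases hv : v ∈ x.1
  · rw [if_pos hv, if_pos (hc.mpr hv), hval]
  · rw [if_neg hv, if_neg (fun hh => hv (hc.mp hh))]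

lemma nEZ_gact (σ : Perm (Vtx n)) (g : Graphs n) : nEZ (gact σ g) = nEZ g := by
  unfold nEZ
  exact Equiv.sum_comp (permEdge σ).symm g

lemma sgn_mul (σ τ : Perm (Vtx n)) : sgn (σ * τ) = sgn σ + sgn τ := by
  unfold sgn
  rw [map_mul]
  rcases Int.units_eq_one_or (Perm.sign σ) with h1 | h1 <;>
    rcases Int.units_eq_one_or (Perm.sign τ) with h2 | h2 <;>
      rw [h1, h2] <;> decide

lemma sgn_inv (σ : Perm (Vtx n)) : sgn σ⁻¹ = sgn σ := by
  unfold sgn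
  rw [map_inv]
  rcases Int.units_eq_one_or (Perm.sign σ) with h1 | h1 <;> rw [h1] <;> decide

/-- the parity subgroup -/
def HH (n : ℕ) : Subgroup (DG n) where
  carrier := {p | (∀ v, degZ p.left.toAdd v = fD v + fD (p.right⁻¹ v)) ∧
    nEZ p.left.toAdd = sgn p.right}
  one_mem' := by
    constructor
    · intro v
      show degZ (0 : Graphs n) v = fD v + fD v
      rw [CharTwo.add_self_eq_zero]
      unfold degZ
      apply Finset.sum_eq_zero
      intro e _
      rfl
    · show nEZ (0 : Graphs n) = sgn 1
      unfold nEZ sgn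
      rw [if_pos (map_one Perm.sign)]
      apply Finset.sum_eq_zero
      intro e _
      rfl
  mul_mem' := by
    rintro p q ⟨hp1, hp2⟩ ⟨hq1, hq2⟩
    have hL : (p * q).left.toAdd = p.left.toAdd + gact p.right q.left.toAdd := rfl
    constructor
    · intro v
      show degZ _ v = fD v + fD ((p*q).right⁻¹ v)
      rw [hL, degZ_add, degZ_gact, hp1 v, hq1 (p.right⁻¹ v),
        SemidirectProduct.mul_right, mul_inv_rev, Perm.mul_apply]
      rw [add_assoc, ← add_assoc (fD (p.right⁻¹ v)), CharTwo.add_self_eq_zero, zero_add]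
    · show nEZ _ = sgn (p*q).right
      rw [hL, nEZ_add, nEZ_gact, hp2, hq2, SemidirectProduct.mul_right, sgn_mul]
  inv_mem' := by
    rintro p ⟨hp1, hp2⟩
    have hL : (p⁻¹).left.toAdd = gact p.right⁻¹ (- p.left.toAdd) := rfl
    have hneg : (- p.left.toAdd) = p.left.toAdd := by
      funext e
      exact CharTwo.neg_eq _
    constructor
    · intro v
      show degZ _ v = fD v + fD ((p⁻¹).right⁻¹ v)
      rw [hL, hneg, degZ_gact, inv_inv, hp1 (p.right v),
        SemidirectProduct.inv_right, inv_inv, show p.right⁻¹ (p.right v) = v from Equiv.symm_apply_apply _ _]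
      exact add_comm _ _
    · show nEZ _ = sgn (p⁻¹).right
      rw [hL, hneg, nEZ_gact, hp2, SemidirectProduct.inv_right, sgn_inv]

end Helper

namespace Helper
variable {n : ℕ}
open Multiplicative

lemma degZ_single {u v : Vtx n} (huv : u ≠ v) (w : Vtx n) :
    degZ (single u v) w = (if w = u then (1:ZMod 2) else 0) + (if w = v then 1 else 0) := by
  have hd : ¬ (s(u,v) : Sym2 (Vtx n)).IsDiag := by
    rw [Sym2.mk_isDiag_iff]; exact huv
  set E₀ : Edge n := ⟨s(u,v), hd⟩ with hE
  unfold degZ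
  rw [Finset.sum_filter]
  rw [Finset.sum_eq_single E₀]
  · have : single u v E₀ = 1 := if_pos rfl
    rw [this]
    have hmem : (w ∈ E₀.1) ↔ (w = u ∨ w = v) := Sym2.mem_iff
    by_cases h1 : w = u
    · rw [if_pos (hmem.mpr (Or.inl h1)), if_pos h1, if_neg (fun h2 => huv (h1.symm.trans h2)),
        add_zero]
    · by_cases h2 : w = v
      · rw [if_pos (hmem.mpr (Or.inr h2)), if_neg h1, if_pos h2, zero_add]
      · rw [if_neg (fun hh => (hmem.mp hh).elim h1 h2), if_neg h1, if_neg h2, add_zero]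
  · intro e _ hne
    have : single u v e = 0 := by
      apply if_neg
      intro hh
      exact hne (Subtype.ext hh)
    rw [this, ite_self]
  · intro h
    exact absurd (Finset.mem_univ E₀) h

lemma nEZ_single {u v : Vtx n} (huv : u ≠ v) : nEZ (single u v) = 1 := by
  have hd : ¬ (s(u,v) : Sym2 (Vtx n)).IsDiag := by
    rw [Sym2.mk_isDiag_iff]; exact huv
  set E₀ : Edge n := ⟨s(u,v), hd⟩ with hE
  unfold nEZ
  rw [Finset.sum_eq_single E₀]
  · exact if_pos rfl
  · intro e _ hne
    exact if_neg (fun hh => hne (Subtype.ext hh))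
  · intro h
    exact absurd (Finset.mem_univ E₀) h

lemma xgen_mem_HH {m : Vtx n} (hm : m ≠ 0) : xgen m ∈ HH n := by
  constructor
  · intro v
    show degZ (single 0 m) v = fD v + fD ((Equiv.swap 0 m)⁻¹ v)
    rw [degZ_single (Ne.symm hm) v, Equiv.swap_inv]
    have h2 : fD (Equiv.swap 0 m v) = if v = m then 1 else 0 := by
      unfold fD
      refine if_congr ?_ rfl rfl
      constructor
      · intro h
        have := congrArg (Equiv.swap 0 m) h
        rwa [Equiv.swap_apply_self, Equiv.swap_apply_left] at this
      · rintro rfl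
        exact Equiv.swap_apply_right 0 _
    rw [h2]
    rfl
  · show nEZ (single 0 m) = sgn (Equiv.swap 0 m)
    rw [nEZ_single (Ne.symm hm)]
    unfold sgn
    rw [Perm.sign_swap (Ne.symm hm), if_neg (by decide)]

lemma Dn_le_HH : Dn n ≤ HH n := by
  rw [Dn, Subgroup.closure_le]
  rintro x ⟨m, hm, rfl⟩
  exact xgen_mem_HH hm

lemma card_filter_mem (v : Vtx n) :
    (Finset.univ.filter fun e : Edge n => v ∈ e.1).card = n := by
  have key : (Finset.univ.filter fun e : Edge n => v ∈ e.1).card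
      = (Finset.univ.erase v).card := by
    refine Finset.card_bij'
      (fun e he => Sym2.Mem.other' ((Finset.mem_filter.mp he).2))
      (fun u hu => ⟨s(v,u), by
        rw [Sym2.mk_isDiag_iff]
        exact fun h => (Finset.mem_erase.mp hu).1 h.symm⟩) ?_ ?_ ?_ ?_
    · intro e he
      refine Finset.mem_erase.mpr ⟨?_, Finset.mem_univ _⟩
      show Sym2.Mem.other' ((Finset.mem_filter.mp he).2) ≠ v
      rw [← Sym2.other_eq_other']
      exact Sym2.other_ne e.2 _
    · intro u hu
      rw [Finset.mem_filter]
      exact ⟨Finset.mem_univ _, Sym2.mem_mk_left v u⟩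
    · intro e he
      apply Subtype.ext
      exact Sym2.other_spec' _
    · intro u hu
      have := Sym2.other_spec' (Sym2.mem_mk_left v u)
      exact Sym2.congr_right.mp this
  rw [key, Finset.card_erase_of_mem (Finset.mem_univ v)]
  simp

lemma degZ_complete (v : Vtx n) : degZ (complete n) v = (n : ZMod 2) := by
  unfold degZ
  have : ∀ e ∈ Finset.univ.filter (fun e : Edge n => v ∈ e.1), complete n e = 1 :=
    fun e _ => rfl
  rw [Finset.sum_congr rfl this, Finset.sum_const, card_filter_mem, nsmul_eq_mul, mul_one]

lemma nEZ_complete : nEZ (complete n) = ((n+1).choose 2 : ZMod 2) := by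
  unfold nEZ
  have : ∀ e ∈ (Finset.univ : Finset (Edge n)), complete n e = 1 := fun e _ => rfl
  rw [Finset.sum_congr rfl this, Finset.sum_const, nsmul_eq_mul, mul_one]
  congr 1
  rw [Finset.card_univ]
  rw [Sym2.card_subtype_not_diag]
  congr 1
  exact Fintype.card_fin (n+1)

lemma mod4_of_complete_mem_HH (hc : (⟨ofAdd (complete n), 1⟩ : DG n) ∈ HH n) :
    n % 4 = 0 := by
  obtain ⟨h1, h2⟩ := hc
  have hd : (n : ZMod 2) = 0 := by
    have := h1 0
    rw [show toAdd (ofAdd (complete n)) = complete n from rfl] at this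
    rw [degZ_complete] at this
    rw [this]
    simp only [inv_one, Perm.one_apply]
    exact CharTwo.add_self_eq_zero _
  have he : (((n+1).choose 2 : ℕ) : ZMod 2) = 0 := by
    have := h2
    rw [show toAdd (ofAdd (complete n)) = complete n from rfl, nEZ_complete] at this
    rw [this]
    unfold sgn
    rw [if_pos (map_one Perm.sign)]
  rw [ZMod.natCast_eq_zero_iff] at hd he
  obtain ⟨m, hm⟩ := hd
  subst hm
  have hch : (2*m+1).choose 2 = (2*m+1)*m := by
    rw [Nat.choose_two_right, show 2*m+1-1 = 2*m from rfl,
      show (2*m+1)*(2*m) = 2*((2*m+1)*m) by ring]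
    exact Nat.mul_div_cancel_left _ (by norm_num)
  rw [hch] at he
  rcases (Nat.Prime.dvd_mul Nat.prime_two).mp he with h | h
  · omega
  · omega

end Helper

namespace Helper
variable {n : ℕ}
open Multiplicative

lemma rightHom_xgen (m : Vtx n) :
    (SemidirectProduct.rightHom : DG n →* Perm (Vtx n)) (xgen m) = Equiv.swap 0 m := rfl

lemma map_rightHom_top :
    (Dn n).map (SemidirectProduct.rightHom : DG n →* Perm (Vtx n)) = ⊤ := by
  rw [Dn, MonoidHom.map_closure]
  rw [eq_top_iff, ← Equiv.Perm.closure_isSwap]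
  rw [Subgroup.closure_le]
  rintro σ ⟨u, v, huv, rfl⟩
  have gen : ∀ m : Vtx n, m ≠ 0 → Equiv.swap 0 m ∈ Subgroup.closure
      ((SemidirectProduct.rightHom : DG n →* Perm (Vtx n)) ''
        {x | ∃ m : Vtx n, m ≠ 0 ∧ x = xgen m}) := by
    intro m hm
    exact Subgroup.subset_closure ⟨xgen m, ⟨m, hm, rfl⟩, rfl⟩
  by_cases hu : u = 0
  · subst hu
    exact gen v (Ne.symm huv)
  by_cases hv : v = 0
  · subst hv
    rw [Equiv.swap_comm]
    exact gen u hu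
  · have key : Equiv.swap u v = Equiv.swap 0 u * Equiv.swap 0 v * (Equiv.swap 0 u)⁻¹ := by
      have h1 := Equiv.swap_apply_apply (Equiv.swap 0 u) 0 v
      rwa [Equiv.swap_apply_left, Equiv.swap_apply_of_ne_of_ne hv (Ne.symm huv)] at h1
    rw [key]
    exact mul_mem (mul_mem (gen u hu) (gen v hv)) (inv_mem (gen u hu))

lemma exists_right (τ : Perm (Vtx n)) : ∃ y : DG n, y ∈ Dn n ∧ y.right = τ := by
  have : τ ∈ (Dn n).map (SemidirectProduct.rightHom : DG n →* Perm (Vtx n)) := by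
    rw [map_rightHom_top]
    trivial
  obtain ⟨y, hy, hyr⟩ := this
  exact ⟨y, hy, hyr⟩

lemma center_right_trivial (hn : 2 ≤ n) (σ : Perm (Vtx n))
    (h : ∀ m : Vtx n, m ≠ 0 → Equiv.swap 0 m * σ = σ * Equiv.swap 0 m) : σ = 1 := by
  have key : ∀ m : Vtx n, m ≠ 0 → σ m = Equiv.swap 0 m (σ 0) := by
    intro m hm
    have hswap : Equiv.swap (σ 0) (σ m) = Equiv.swap 0 m := by
      have h1 := Equiv.swap_apply_apply σ 0 m
      rw [← h m hm] at h1
      rw [h1, mul_assoc, mul_inv_cancel, mul_one]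
    have := congrArg (fun f : Perm (Vtx n) => f (σ 0)) hswap
    simpa using this
  by_cases h0 : σ 0 = 0
  · ext x
    simp only [Perm.one_apply, Perm.coe_one, id_eq]
    by_cases hx : x = 0
    · rw [hx, h0]
    · rw [key x hx, h0, Equiv.swap_apply_left]
  · exfalso
    set m1 : Vtx n := ((1:ℕ) : Vtx n) with hm1
    set m2 : Vtx n := ((2:ℕ) : Vtx n) with hm2
    have hb1 : (1:ℕ) < n+1 := by omega
    have hb2 : (2:ℕ) < n+1 := by omega
    have hb0 : (0:ℕ) < n+1 := by omega
    have z0 : ((0:ℕ) : Vtx n) = (0 : Vtx n) := by simp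
    have h1ne0 : m1 ≠ 0 := by rw [hm1, ← z0]; exact cast_ne hb1 hb0 (by omega)
    have h2ne0 : m2 ≠ 0 := by rw [hm2, ← z0]; exact cast_ne hb2 hb0 (by omega)
    have h12 : m1 ≠ m2 := by rw [hm1, hm2]; exact cast_ne hb1 hb2 (by omega)
    set m : Vtx n := if σ 0 = m1 then m2 else m1 with hm
    have hmne0 : m ≠ 0 := by
      rw [hm]; split
      · exact h2ne0
      · exact h1ne0
    have hmneσ0 : m ≠ σ 0 := by
      rw [hm]; split
      · rename_i hh
        rw [hh]; exact h12.symm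
      · rename_i hh
        exact fun he => hh he.symm
    have := key m hmne0
    rw [Equiv.swap_apply_of_ne_of_ne h0 (fun hh => hmneσ0 hh.symm)] at this
    have : m = (0 : Vtx n) := σ.injective this
    exact hmne0 this

lemma invariant_classify (g : Graphs n) (hg : ∀ τ : Perm (Vtx n), gact τ g = g) :
    g = 0 ∨ g = complete n := by
  have key : ∀ e e' : Edge n, g e = g e' := by
    rintro ⟨z, hz⟩ ⟨z', hz'⟩
    revert hz
    refine Sym2.ind (fun a b => ?_) z
    intro hz
    revert hz'
    refine Sym2.ind (fun c d => ?_) z'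
    intro hz'
    have hab : a ≠ b := by simpa [Sym2.mk_isDiag_iff] using hz
    have hcd : c ≠ d := by simpa [Sym2.mk_isDiag_iff] using hz'
    set σ : Perm (Vtx n) := Equiv.swap (Equiv.swap a c b) d * Equiv.swap a c with hσ
    have hσa : σ a = c := by
      rw [hσ, Perm.mul_apply, Equiv.swap_apply_left]
      refine Equiv.swap_apply_of_ne_of_ne ?_ hcd
      intro hh
      apply hab
      have := congrArg (Equiv.swap a c) hh
      rwa [Equiv.swap_apply_self, Equiv.swap_apply_right] at this
    have hσb : σ b = d := by
      rw [hσ, Perm.mul_apply, Equiv.swap_apply_left]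
    have hsc : σ.symm c = a := by
      rw [Equiv.symm_apply_eq, hσa]
    have hsd : σ.symm d = b := by
      rw [Equiv.symm_apply_eq, hσb]
    conv_rhs => rw [← hg σ]
    show g _ = g ((permEdge σ).symm ⟨s(c,d), hz'⟩)
    refine congrArg g (Subtype.ext ?_).symm
    show Sym2.map σ.symm s(c,d) = s(a,b)
    rw [Sym2.map_pair_eq, hsc, hsd]
  by_cases h0 : g = 0
  · exact Or.inl h0
  · right
    have hone : ∀ x : ZMod 2, x ≠ 0 → x = 1 := by decide
    obtain ⟨e₀, he₀⟩ : ∃ e, g e ≠ 0 := by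
      by_contra hc
      push_neg at hc
      exact h0 (funext fun e => hc e)
    funext e
    rw [key e e₀]
    exact hone _ he₀

def cElt (n : ℕ) : DG n := ⟨ofAdd (complete n), 1⟩

lemma gact_complete (τ : Perm (Vtx n)) : gact τ (complete n) = complete n :=
  funext fun _ => rfl

lemma cElt_comm (y : DG n) : y * cElt n = cElt n * y := by
  ext : 1
  · show y.left * (φn n y.right) (ofAdd (complete n)) = ofAdd (complete n) * (φn n 1) y.left
    have h1 : (φn n y.right) (ofAdd (complete n)) = ofAdd (complete n) := by
      show ofAdd (gact y.right (complete n)) = _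
      rw [gact_complete]
    have h2 : (φn n 1) y.left = y.left := by
      rw [map_one]
      rfl
    rw [h1, h2, mul_comm]
  · simp [cElt]

lemma center_sub (hn : 2 ≤ n) (x : DG n) (hx : x ∈ Dn n)
    (hc : ∀ y ∈ Dn n, y * x = x * y) : x = 1 ∨ x = cElt n := by
  have hr : x.right = 1 := by
    apply center_right_trivial hn
    intro m hm
    have h1 := congrArg SemidirectProduct.right (hc (xgen m) (xgen_mem hm))
    simpa [xgen] using h1
  have hinv : ∀ τ : Perm (Vtx n), gact τ (toAdd x.left) = toAdd x.left := by
    intro τ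
    obtain ⟨y, hy, hyr⟩ := exists_right (n := n) τ
    have hl := congrArg SemidirectProduct.left (hc y hy)
    simp only [SemidirectProduct.mul_left] at hl
    rw [hr, map_one, hyr] at hl
    have hl2 : y.left * (φn n τ) x.left = x.left * y.left := by
      simpa using hl
    rw [mul_comm (x.left)] at hl2
    have := mul_left_cancel hl2
    have h3 : toAdd ((φn n τ) x.left) = toAdd x.left := congrArg toAdd this
    exact h3
  rcases invariant_classify (toAdd x.left) hinv with h | h
  · left
    have hL : x.left = 1 := by
      have := congrArg ofAdd h
      simpa using this
    exact SemidirectProduct.ext hL hr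
  · right
    have hL : x.left = ofAdd (complete n) := by
      have := congrArg ofAdd h
      simpa using this
    exact SemidirectProduct.ext hL hr

lemma cElt_ne_one (hn : 2 ≤ n) : cElt n ≠ (1 : DG n) := by
  intro h
  have h1 := congrArg SemidirectProduct.left h
  have h2 : complete n = (0 : Graphs n) := by
    have := congrArg toAdd h1
    simpa [cElt] using this
  have hb1 : (1:ℕ) < n+1 := by omega
  have hb0 : (0:ℕ) < n+1 := by omega
  have hne : ((0:ℕ) : Vtx n) ≠ ((1:ℕ) : Vtx n) := cast_ne hb0 hb1 (by omega)
  have hd : ¬ (s(((0:ℕ) : Vtx n),((1:ℕ) : Vtx n)) : Sym2 (Vtx n)).IsDiag := by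
    rw [Sym2.mk_isDiag_iff]; exact hne
  have := congrFun h2 ⟨_, hd⟩
  exact one_ne_zero (this : (1 : ZMod 2) = 0)

lemma cElt_sq : (cElt n) * (cElt n) = 1 := by
  show (⟨ofAdd (complete n), 1⟩ : DG n) * ⟨ofAdd (complete n), 1⟩ = 1
  rw [mk_mul, gact_one, add_self]
  rfl

end Helper


open Helper Multiplicative in
/-- For `n ≥ 2`, the centre of `D_n` has order 2 if `n ≡ 0 (mod 4)` and is trivial
otherwise. -/
theorem stmt14 (n : ℕ) (hn : 2 ≤ n) :
    Nat.card (Subgroup.center (Dn n)) = if n % 4 = 0 then 2 else 1 := by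
  have center_val : ∀ x : (Dn n), x ∈ Subgroup.center (Dn n) →
      (x : DG n) = 1 ∨ (x : DG n) = cElt n := by
    intro x hx
    have hcomm : ∀ y ∈ Dn n, y * (x : DG n) = (x : DG n) * y := by
      intro y hy
      have h2 := Subgroup.mem_center_iff.mp hx ⟨y, hy⟩
      exact Subtype.ext_iff.mp h2
    exact center_sub hn (x : DG n) x.2 hcomm
  by_cases h4 : n % 4 = 0
  · rw [if_pos h4]
    have hmem : cElt n ∈ Dn n := complete_mem (n/4) (by omega) (by omega)
    set ct : (Dn n) := ⟨cElt n, hmem⟩ with hct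
    have hcenter : Subgroup.center (Dn n) = Subgroup.zpowers ct := by
      apply le_antisymm
      · intro x hx
        rcases center_val x hx with h | h
        · have : x = 1 := Subtype.ext h
          rw [this]
          exact one_mem _
        · have : x = ct := Subtype.ext h
          rw [this]
          exact Subgroup.mem_zpowers _
      · apply Subgroup.zpowers_le.mpr
        apply Subgroup.mem_center_iff.mpr
        intro g
        apply Subtype.ext
        exact cElt_comm (g : DG n)
    rw [hcenter, Nat.card_zpowers]
    haveI : Fact (Nat.Prime 2) := ⟨Nat.prime_two⟩
    apply orderOf_eq_prime
    · apply Subtype.ext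
      have : ((ct^2 : (Dn n)) : DG n) = cElt n * cElt n := by
        rw [pow_two]
        rfl
      rw [this, cElt_sq]
      rfl
    · intro h
      exact cElt_ne_one hn (Subtype.ext_iff.mp h)
  · rw [if_neg h4]
    have hbot : Subgroup.center (Dn n) = ⊥ := by
      rw [eq_bot_iff]
      intro x hx
      rcases center_val x hx with h | h
      · rw [Subgroup.mem_bot]
        exact Subtype.ext h
      · exfalso
        apply h4
        apply mod4_of_complete_mem_HH
        have : cElt n ∈ Dn n := h ▸ x.2
        exact Dn_le_HH this
    rw [hbot, Subgroup.card_bot]
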